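/- Let x ∈ Ω, τ > 0, and let A be the forward finite-difference Jacobian approximation of F at x with stepsize τ. Given r, ε > 0, if ψ_{p,r}(x) > ε and τ ≤ max{2η_{p,r}(x;A), ε} / (L_{h,p} L_J c_{p,2}(m) c_{2,p}(n) √n), then η_{p,r}(x;A) > ε/2. -/

import Mathlib

open scoped ENNReal

noncomputable section

/-- The `p`-norm on `ℝ^n`, for `p ∈ [1,∞]`. -/
def pNorm (p : ℝ≥0∞) {n : ℕ} (x : Fin n → ℝ) : ℝ :=
  if p = ∞ then ⨆ i, |x i| else (∑ i, |x i| ^ p.toReal) ^ (1 / p.toReal)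

/-- The Euclidean norm on `ℝ^n`. -/
def eucNorm {n : ℕ} (x : Fin n → ℝ) : ℝ := Real.sqrt (∑ i, x i ^ 2)

/-- The operator norm of a matrix, induced by Euclidean norms. -/
def opNorm2 {m n : ℕ} (A : Matrix (Fin m) (Fin n) ℝ) : ℝ :=
  sSup ((fun v => eucNorm (A.mulVec v)) '' {v | eucNorm v ≤ 1})

/-- Forward finite-difference approximation of the Jacobian of `F` at `x` with stepsize `τ`:
the `j`-th column is `(F (x + τ e_j) - F x) / τ`. -/
def fdMatrix {n m : ℕ} (F : (Fin n → ℝ) → (Fin m → ℝ)) (x : Fin n → ℝ) (τ : ℝ) :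
    Matrix (Fin m) (Fin n) ℝ :=
  Matrix.of fun i j => (F (x + Pi.single j τ) i - F x i) / τ

/-- Stationarity measure `ψ_{p,r}(x)`. -/
def psi {n m : ℕ} (Ω : Set (Fin n → ℝ)) (F : (Fin n → ℝ) → (Fin m → ℝ))
    (h : (Fin m → ℝ) → ℝ) (J : (Fin n → ℝ) → Matrix (Fin m) (Fin n) ℝ)
    (p : ℝ≥0∞) (r : ℝ) (x : Fin n → ℝ) : ℝ :=
  r⁻¹ * (h (F x) -
    sInf ((fun s => h (F x + (J x).mulVec s)) '' {s | x + s ∈ Ω ∧ pNorm p s ≤ r}))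

/-- Approximate stationarity measure `η_{p,r}(x; A)`. -/
def eta {n m : ℕ} (Ω : Set (Fin n → ℝ)) (F : (Fin n → ℝ) → (Fin m → ℝ))
    (h : (Fin m → ℝ) → ℝ) (p : ℝ≥0∞) (r : ℝ) (x : Fin n → ℝ)
    (A : Matrix (Fin m) (Fin n) ℝ) : ℝ :=
  r⁻¹ * (h (F x) -
    sInf ((fun s => h (F x + A.mulVec s)) '' {s | x + s ∈ Ω ∧ pNorm p s ≤ r}))

def toE {k : ℕ} (v : Fin k → ℝ) : EuclideanSpace ℝ (Fin k) := WithLp.toLp 2 v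

lemma toE_add {k : ℕ} (a b : Fin k → ℝ) : toE (a + b) = toE a + toE b := rfl
lemma toE_smul {k : ℕ} (c : ℝ) (a : Fin k → ℝ) : toE (c • a) = c • toE a := rfl
lemma toE_sub {k : ℕ} (a b : Fin k → ℝ) : toE (a - b) = toE a - toE b := rfl
lemma toE_sum {k : ℕ} {ι : Type*} (s : Finset ι) (f : ι → (Fin k → ℝ)) :
    toE (∑ j ∈ s, f j) = ∑ j ∈ s, toE (f j) := WithLp.toLp_sum _ _ _ _

lemma eucNorm_eq {k : ℕ} (v : Fin k → ℝ) : eucNorm v = ‖toE v‖ := by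
  rw [EuclideanSpace.norm_eq]
  simp [eucNorm, toE, Real.norm_eq_abs, sq_abs]

lemma eucNorm_nonneg {k : ℕ} (v : Fin k → ℝ) : 0 ≤ eucNorm v := Real.sqrt_nonneg _

lemma eucNorm_smul {k : ℕ} (c : ℝ) (v : Fin k → ℝ) : eucNorm (c • v) = |c| * eucNorm v := by
  rw [eucNorm_eq, eucNorm_eq, toE_smul, norm_smul, Real.norm_eq_abs]

lemma abs_le_eucNorm {k : ℕ} (v : Fin k → ℝ) (i : Fin k) : |v i| ≤ eucNorm v := by
  rw [← Real.sqrt_sq_eq_abs]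
  exact Real.sqrt_le_sqrt (Finset.single_le_sum (fun j _ => sq_nonneg (v j)) (Finset.mem_univ i))

lemma sum_abs_le_sqrt {k : ℕ} (v : Fin k → ℝ) :
    ∑ j, |v j| ≤ Real.sqrt k * eucNorm v := by
  have h1 : (∑ j, |v j|) ^ 2 ≤ (k : ℝ) * ∑ j, v j ^ 2 := by
    calc (∑ j, |v j|) ^ 2 ≤ (Finset.univ.card : ℝ) * ∑ j, |v j| ^ 2 :=
          sq_sum_le_card_mul_sum_sq
    _ = (k : ℝ) * ∑ j, v j ^ 2 := by simp [sq_abs]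
  calc ∑ j, |v j| = Real.sqrt ((∑ j, |v j|) ^ 2) :=
        (Real.sqrt_sq (Finset.sum_nonneg fun j _ => abs_nonneg _)).symm
  _ ≤ Real.sqrt ((k : ℝ) * ∑ j, v j ^ 2) := Real.sqrt_le_sqrt h1
  _ = Real.sqrt k * eucNorm v := by
      rw [Real.sqrt_mul (Nat.cast_nonneg k)]; rfl

lemma mulVec_eq_sum_cols {mm nn : ℕ} (M : Matrix (Fin mm) (Fin nn) ℝ) (s : Fin nn → ℝ) :
    M.mulVec s = ∑ j, s j • (fun i => M i j) := by
  funext i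
  simp [Matrix.mulVec, dotProduct, Finset.sum_apply, mul_comm]

lemma eucNorm_mulVec_le_sum_cols {mm nn : ℕ} (M : Matrix (Fin mm) (Fin nn) ℝ) (s : Fin nn → ℝ) :
    eucNorm (M.mulVec s) ≤ (∑ j, eucNorm (fun i => M i j)) * eucNorm s := by
  rw [mulVec_eq_sum_cols, eucNorm_eq, toE_sum]
  calc ‖∑ j, toE (s j • fun i => M i j)‖ ≤ ∑ j, ‖toE (s j • fun i => M i j)‖ :=
        norm_sum_le _ _
  _ ≤ ∑ j, eucNorm (fun i => M i j) * eucNorm s := by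
      refine Finset.sum_le_sum fun j _ => ?_
      rw [toE_smul, norm_smul, Real.norm_eq_abs, ← eucNorm_eq, mul_comm]
      exact mul_le_mul_of_nonneg_left (abs_le_eucNorm s j) (eucNorm_nonneg _)
  _ = _ := by rw [Finset.sum_mul]

lemma eucNorm_mulVec_le_opNorm2 {mm nn : ℕ} (M : Matrix (Fin mm) (Fin nn) ℝ) (v : Fin nn → ℝ) :
    eucNorm (M.mulVec v) ≤ opNorm2 M * eucNorm v := by
  have hbdd : BddAbove ((fun v => eucNorm (M.mulVec v)) '' {v | eucNorm v ≤ 1}) := by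
    refine ⟨∑ j, eucNorm (fun i => M i j), ?_⟩
    rintro y ⟨w, hw, rfl⟩
    calc eucNorm (M.mulVec w) ≤ (∑ j, eucNorm (fun i => M i j)) * eucNorm w :=
          eucNorm_mulVec_le_sum_cols M w
    _ ≤ (∑ j, eucNorm (fun i => M i j)) * 1 :=
        mul_le_mul_of_nonneg_left hw (Finset.sum_nonneg fun j _ => eucNorm_nonneg _)
    _ = _ := mul_one _
  rcases eq_or_ne (eucNorm v) 0 with hv0 | hv0
  · -- v has zero norm, hence v = 0
    have hv : v = 0 := by
      funext i
      have h1 := abs_le_eucNorm v i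
      rw [hv0] at h1
      simpa using abs_nonpos_iff.mp h1
    have h0 : eucNorm (M.mulVec (0 : Fin nn → ℝ)) = 0 := by
      simp [Matrix.mulVec_zero, eucNorm]
    have hop : 0 ≤ opNorm2 M := by
      have hmem : (0 : ℝ) ∈ (fun v => eucNorm (M.mulVec v)) '' {v | eucNorm v ≤ 1} := by
        refine ⟨0, ?_, h0⟩
        simp only [Set.mem_setOf_eq]
        have : eucNorm (0 : Fin nn → ℝ) = 0 := by simp [eucNorm]
        simp [this]
      exact le_csSup hbdd hmem
    rw [hv, h0]; rw [hv] at hv0; rw [hv0, mul_zero]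
  · have hvpos : 0 < eucNorm v := lt_of_le_of_ne (eucNorm_nonneg v) (Ne.symm hv0)
    have key : eucNorm (M.mulVec ((eucNorm v)⁻¹ • v)) ≤ opNorm2 M := by
      refine le_csSup hbdd ⟨(eucNorm v)⁻¹ • v, ?_, rfl⟩
      simp only [Set.mem_setOf_eq, eucNorm_smul, abs_inv, abs_of_pos hvpos]
      rw [inv_mul_cancel₀ hv0]
    rw [Matrix.mulVec_smul, eucNorm_smul, abs_inv, abs_of_pos hvpos] at key
    calc eucNorm (M.mulVec v) = eucNorm v * ((eucNorm v)⁻¹ * eucNorm (M.mulVec v)) := by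
          field_simp
    _ ≤ eucNorm v * opNorm2 M := mul_le_mul_of_nonneg_left key hvpos.le
    _ = _ := mul_comm _ _

lemma pNorm_zero {k : ℕ} {p : ℝ≥0∞} (hp : 1 ≤ p) : pNorm p (0 : Fin k → ℝ) = 0 := by
  rcases eq_or_ne p ∞ with hpi | hpi
  · simp [pNorm, hpi]
  · have hpt : 0 < p.toReal := ENNReal.toReal_pos (by positivity) hpi
    have h1 : (1 : ℝ) / p.toReal ≠ 0 := by positivity
    simp [pNorm, hpi, Real.zero_rpow hpt.ne', Real.zero_rpow h1, Real.zero_rpow (inv_ne_zero hpt.ne')]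

lemma eucNorm_single_one {k : ℕ} (j : Fin k) : eucNorm (Pi.single j (1:ℝ)) = 1 := by
  have : ∑ i, ((Pi.single j (1:ℝ) : Fin k → ℝ) i) ^ 2 = 1 := by
    simp [Pi.single_apply, sq, ite_mul, Finset.sum_ite_eq']
  simp [eucNorm, this]

lemma eucNorm_neg {k : ℕ} (v : Fin k → ℝ) : eucNorm (-v) = eucNorm v := by
  simp [eucNorm, neg_sq]

lemma norm_toE {k : ℕ} (v : Fin k → ℝ) : ‖toE v‖ = eucNorm v := (eucNorm_eq v).symm

lemma column_error {n m : ℕ} {F : (Fin n → ℝ) → (Fin m → ℝ)}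
    {J : (Fin n → ℝ) → Matrix (Fin m) (Fin n) ℝ}
    (hJ : ∀ y, HasFDerivAt F (LinearMap.toContinuousLinearMap (Matrix.mulVecLin (J y))) y)
    {LJ : ℝ} (hLJ : 0 ≤ LJ)
    (hJLip : ∀ y z, opNorm2 (J y - J z) ≤ LJ * eucNorm (y - z))
    (x : Fin n → ℝ) {τ : ℝ} (hτ : 0 < τ) (j : Fin n) :
    eucNorm (F (x + Pi.single j τ) - F x - τ • (J x).mulVec (Pi.single j 1))
      ≤ LJ * τ ^ 2 / 2 := by
  set d : Fin n → ℝ := Pi.single j 1 with hd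
  set e : (Fin m → ℝ) ≃L[ℝ] EuclideanSpace ℝ (Fin m) := (EuclideanSpace.equiv (Fin m) ℝ).symm
    with he
  have he_toE : ∀ v : Fin m → ℝ, e v = toE v := fun v => rfl
  -- the path and its derivative
  have hφ : ∀ t : ℝ, HasDerivAt (fun t : ℝ => e (F (x + t • d)))
      (e ((J (x + t • d)).mulVec d)) t := by
    intro t
    have hpath : HasDerivAt (fun t : ℝ => x + t • d) d t := by
      simpa using ((hasDerivAt_id t).smul_const d).const_add x
    have h1 : HasDerivAt (fun t : ℝ => F (x + t • d)) ((J (x + t • d)).mulVec d) t := by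
      have := (hJ (x + t • d)).comp_hasDerivAt t hpath
      exact this
    exact ((e : (Fin m → ℝ) →L[ℝ] EuclideanSpace ℝ (Fin m)).hasFDerivAt).comp_hasDerivAt t h1
  set c0 : EuclideanSpace ℝ (Fin m) := e ((J x).mulVec d) with hc0
  set g : ℝ → EuclideanSpace ℝ (Fin m) := fun t => e (F (x + t • d)) - t • c0 with hg
  have hg' : ∀ t : ℝ, HasDerivAt g (e ((J (x + t • d)).mulVec d) - c0) t := by
    intro t
    have h2 : HasDerivAt (fun t : ℝ => t • c0) c0 t := by
      simpa using (hasDerivAt_id t).smul_const c0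
    exact (hφ t).sub h2
  have bound : ∀ t ∈ Set.Ico (0:ℝ) τ, ‖e ((J (x + t • d)).mulVec d) - c0‖ ≤ LJ * t := by
    intro t ht
    have heq : e ((J (x + t • d)).mulVec d) - c0 = toE ((J (x + t • d) - J x).mulVec d) := by
      rw [hc0, he_toE, he_toE, Matrix.sub_mulVec, toE_sub]
    rw [heq, norm_toE]
    calc eucNorm ((J (x + t • d) - J x).mulVec d)
        ≤ opNorm2 (J (x + t • d) - J x) * eucNorm d := eucNorm_mulVec_le_opNorm2 _ _
    _ = opNorm2 (J (x + t • d) - J x) := by rw [hd, eucNorm_single_one, mul_one]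
    _ ≤ LJ * eucNorm (x + t • d - x) := hJLip _ _
    _ = LJ * t := by
        rw [add_sub_cancel_left, eucNorm_smul, hd, eucNorm_single_one, mul_one,
          abs_of_nonneg ht.1]
  have main : ‖g τ - g 0‖ ≤ LJ * τ ^ 2 / 2 := by
    have := image_norm_le_of_norm_deriv_right_le_deriv_boundary
      (f := fun t => g t - g 0) (f' := fun t => e ((J (x + t • d)).mulVec d) - c0)
      (a := 0) (b := τ)
      (fun t _ => ((hg' t).sub_const (g 0)).continuousAt.continuousWithinAt)
      (fun t _ => ((hg' t).sub_const (g 0)).hasDerivWithinAt)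
      (B := fun t => LJ * t ^ 2 / 2) (B' := fun t => LJ * t)
      (by simp)
      (fun t => by
        have h3 := ((hasDerivAt_pow 2 t).const_mul LJ).div_const 2
        refine h3.congr_deriv ?_
        ring)
      bound
    exact this (Set.mem_Icc.mpr ⟨hτ.le, le_refl τ⟩)
  have hsingle : Pi.single j τ = τ • d := by
    rw [hd, ← Pi.single_smul, smul_eq_mul, mul_one]
  have heq2 : g τ - g 0 = toE (F (x + Pi.single j τ) - F x - τ • (J x).mulVec d) := by
    rw [hg, hc0]
    simp only [zero_smul, sub_zero, he_toE, hsingle]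
    rw [toE_sub, toE_sub, toE_smul]
    abel
  rw [heq2, norm_toE] at main
  exact main

/-- Lemma 2.6: if ψ > ε and τ is small enough then η > ε/2. -/
theorem stmt4
    {n m : ℕ} (hn : 1 ≤ n) (hm : 1 ≤ m) (p : ℝ≥0∞) (hp : 1 ≤ p)
    (Ω : Set (Fin n → ℝ)) (hΩne : Ω.Nonempty) (hΩcl : IsClosed Ω) (hΩcv : Convex ℝ Ω)
    (F : (Fin n → ℝ) → (Fin m → ℝ)) (J : (Fin n → ℝ) → Matrix (Fin m) (Fin n) ℝ)
    (hJ : ∀ y, HasFDerivAt F (LinearMap.toContinuousLinearMap (Matrix.mulVecLin (J y))) y)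
    (LJ : ℝ) (hLJ : 0 < LJ)
    (hJLip : ∀ y z, opNorm2 (J y - J z) ≤ LJ * eucNorm (y - z))
    (h : (Fin m → ℝ) → ℝ) (hconv : ConvexOn ℝ Set.univ h)
    (Lh : ℝ) (hLh : 0 < Lh)
    (hhLip : ∀ z w, |h z - h w| ≤ Lh * pNorm p (z - w))
    (cnp cpm : ℝ) (hcnp1 : 1 ≤ cnp) (hcpm1 : 1 ≤ cpm)
    (hcnp : ∀ v : Fin n → ℝ, eucNorm v ≤ cnp * pNorm p v)
    (hcpm : ∀ z : Fin m → ℝ, pNorm p z ≤ cpm * eucNorm z)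
    (x : Fin n → ℝ) (hx : x ∈ Ω) (τ : ℝ) (hτ : 0 < τ) (r ε : ℝ) (hr : 0 < r) (hε : 0 < ε)
    (hψ : ε < psi Ω F h J p r x)
    (hτle : τ ≤ max (2 * eta Ω F h p r x (fdMatrix F x τ)) ε /
      (Lh * LJ * cpm * cnp * Real.sqrt n)) :
    ε / 2 < eta Ω F h p r x (fdMatrix F x τ) := by
  by_contra hc
  push_neg at hc
  simp only [psi, eta] at hψ hc hτle
  set A := fdMatrix F x τ with hA
  set B := J x with hB
  set S : Set (Fin n → ℝ) := {s | x + s ∈ Ω ∧ pNorm p s ≤ r} with hS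
  have hcnp0 : (0:ℝ) ≤ cnp := le_trans zero_le_one hcnp1
  have hcpm0 : (0:ℝ) ≤ cpm := le_trans zero_le_one hcpm1
  have hS0 : (0 : Fin n → ℝ) ∈ S := by
    refine ⟨by simpa using hx, ?_⟩
    rw [pNorm_zero hp]; exact hr.le
  -- column error bound for B - A
  have hcol : ∀ j : Fin n, eucNorm (fun i => (B - A) i j) ≤ LJ * τ / 2 := by
    intro j
    have hce := column_error hJ hLJ.le hJLip x hτ j
    have hcolid : (fun i => (B - A) i j)
        = -(τ⁻¹ • (F (x + Pi.single j τ) - F x - τ • B.mulVec (Pi.single j 1))) := by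
      funext i
      have hBcol : B.mulVec (Pi.single j 1) i = B i j := by
        simp [Matrix.mulVec, dotProduct, Pi.single_apply, mul_ite,
          Finset.sum_ite_eq']
      simp only [Matrix.sub_apply, hA, fdMatrix, Matrix.of_apply, Pi.neg_apply,
        Pi.smul_apply, Pi.sub_apply, smul_eq_mul, hBcol]
      field_simp
      ring
    rw [hcolid, eucNorm_neg, eucNorm_smul, abs_inv, abs_of_pos hτ]
    calc τ⁻¹ * eucNorm (F (x + Pi.single j τ) - F x - τ • B.mulVec (Pi.single j 1))
        ≤ τ⁻¹ * (LJ * τ ^ 2 / 2) := by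
          exact mul_le_mul_of_nonneg_left hce (inv_nonneg.mpr hτ.le)
    _ = LJ * τ / 2 := by field_simp
  -- action bound for B - A
  have hBA : ∀ s : Fin n → ℝ,
      eucNorm ((B - A).mulVec s) ≤ LJ * τ / 2 * (Real.sqrt n * eucNorm s) := by
    intro s
    rw [mulVec_eq_sum_cols, eucNorm_eq, toE_sum]
    calc ‖∑ j, toE (s j • fun i => (B - A) i j)‖
        ≤ ∑ j, |s j| * eucNorm (fun i => (B - A) i j) := by
          refine (norm_sum_le _ _).trans (Finset.sum_le_sum fun j _ => le_of_eq ?_)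
          rw [toE_smul, norm_smul, Real.norm_eq_abs, ← eucNorm_eq]
    _ ≤ ∑ j, |s j| * (LJ * τ / 2) :=
        Finset.sum_le_sum fun j _ => mul_le_mul_of_nonneg_left (hcol j) (abs_nonneg _)
    _ = LJ * τ / 2 * ∑ j, |s j| := by rw [← Finset.sum_mul, mul_comm]
    _ ≤ LJ * τ / 2 * (Real.sqrt n * eucNorm s) :=
        mul_le_mul_of_nonneg_left (sum_abs_le_sqrt s) (by positivity)
  -- the uniform perturbation bound
  set D : ℝ := Lh * (cpm * (LJ * τ / 2 * (Real.sqrt n * (cnp * r)))) with hD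
  have hpt : ∀ s ∈ S, |h (F x + B.mulVec s) - h (F x + A.mulVec s)| ≤ D := by
    intro s hs
    have hd := hhLip (F x + B.mulVec s) (F x + A.mulVec s)
    have hdiff : (F x + B.mulVec s) - (F x + A.mulVec s) = (B - A).mulVec s := by
      rw [Matrix.sub_mulVec]; abel
    rw [hdiff] at hd
    refine hd.trans ?_
    have e3 : eucNorm s ≤ cnp * r :=
      (hcnp s).trans (mul_le_mul_of_nonneg_left hs.2 hcnp0)
    calc Lh * pNorm p ((B - A).mulVec s)
        ≤ Lh * (cpm * eucNorm ((B - A).mulVec s)) :=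
          mul_le_mul_of_nonneg_left (hcpm _) hLh.le
    _ ≤ Lh * (cpm * (LJ * τ / 2 * (Real.sqrt n * eucNorm s))) :=
          mul_le_mul_of_nonneg_left (mul_le_mul_of_nonneg_left (hBA s) hcpm0) hLh.le
    _ ≤ D := by
          rw [hD]
          refine mul_le_mul_of_nonneg_left (mul_le_mul_of_nonneg_left
            (mul_le_mul_of_nonneg_left (mul_le_mul_of_nonneg_left e3 ?_) ?_) hcpm0) hLh.le
          · exact Real.sqrt_nonneg _
          · positivity
  -- both images are bounded below
  have hbdd : ∀ M : Matrix (Fin m) (Fin n) ℝ,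
      BddBelow ((fun s => h (F x + M.mulVec s)) '' S) := by
    intro M
    set K := ∑ j, eucNorm (fun i => M i j) with hK
    have hK0 : 0 ≤ K := Finset.sum_nonneg fun j _ => eucNorm_nonneg _
    refine ⟨h (F x) - Lh * (cpm * (K * (cnp * r))), ?_⟩
    rintro y ⟨s, hs, rfl⟩
    have habs := hhLip (F x + M.mulVec s) (F x)
    rw [add_sub_cancel_left] at habs
    have hple : pNorm p (M.mulVec s) ≤ cpm * (K * (cnp * r)) := by
      have e3 : eucNorm s ≤ cnp * r :=
        (hcnp s).trans (mul_le_mul_of_nonneg_left hs.2 hcnp0)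
      calc pNorm p (M.mulVec s) ≤ cpm * eucNorm (M.mulVec s) := hcpm _
      _ ≤ cpm * (K * eucNorm s) :=
          mul_le_mul_of_nonneg_left (eucNorm_mulVec_le_sum_cols M s) hcpm0
      _ ≤ cpm * (K * (cnp * r)) :=
          mul_le_mul_of_nonneg_left (mul_le_mul_of_nonneg_left e3 hK0) hcpm0
    have h2 : |h (F x + M.mulVec s) - h (F x)| ≤ Lh * (cpm * (K * (cnp * r))) :=
      habs.trans (mul_le_mul_of_nonneg_left hple hLh.le)
    have h3 := (abs_le.mp h2).1
    simp only [Set.mem_setOf_eq]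
    linarith
  have hneS : S.Nonempty := ⟨0, hS0⟩
  -- comparison of the two infima
  have hkey : sInf ((fun s => h (F x + A.mulVec s)) '' S) - D
      ≤ sInf ((fun s => h (F x + B.mulVec s)) '' S) := by
    refine le_csInf (hneS.image _) ?_
    rintro y ⟨s, hs, rfl⟩
    have h1 : sInf ((fun s => h (F x + A.mulVec s)) '' S) ≤ h (F x + A.mulVec s) :=
      csInf_le (hbdd A) ⟨s, hs, rfl⟩
    have h2 := (abs_le.mp (hpt s hs)).1
    simp only
    linarith
  -- final arithmetic
  set IA := sInf ((fun s => h (F x + A.mulVec s)) '' S) with hIA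
  set IB := sInf ((fun s => h (F x + B.mulVec s)) '' S) with hIB
  have hn1 : (1:ℝ) ≤ (n:ℝ) := by exact_mod_cast hn
  have hsq : (1:ℝ) ≤ Real.sqrt n := by
    rw [show (1:ℝ) = Real.sqrt 1 from Real.sqrt_one.symm]
    exact Real.sqrt_le_sqrt hn1
  have hcpmpos : (0:ℝ) < cpm := lt_of_lt_of_le one_pos hcpm1
  have hcnppos : (0:ℝ) < cnp := lt_of_lt_of_le one_pos hcnp1
  have hK0pos : (0:ℝ) < Lh * LJ * cpm * cnp * Real.sqrt n :=
    mul_pos (mul_pos (mul_pos (mul_pos hLh hLJ) hcpmpos) hcnppos)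
      (lt_of_lt_of_le one_pos hsq)
  have hmax : max (2 * (r⁻¹ * (h (F x) - IA))) ε = ε := max_eq_right (by linarith)
  rw [hmax] at hτle
  have hτ2 : Lh * LJ * cpm * cnp * Real.sqrt n * τ ≤ ε := by
    rw [mul_comm]
    exact (le_div_iff₀ hK0pos).mp hτle
  have hrD : r⁻¹ * D = Lh * LJ * cpm * cnp * Real.sqrt n * τ / 2 := by
    rw [hD]; field_simp
  have h5 : h (F x) - IB ≤ (h (F x) - IA) + D := by linarith
  have h6 : r⁻¹ * (h (F x) - IB) ≤ r⁻¹ * ((h (F x) - IA) + D) :=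
    mul_le_mul_of_nonneg_left h5 (inv_nonneg.mpr hr.le)
  rw [mul_add] at h6
  linarith
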